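/- Let p, q be coprime odd integers with 0 < q < p, let P_k, Q_k be the standard sequences (P_{−1}=0, P_0=1, Q_{−1}=1, Q_0=0, both satisfying R_k = ε_k X R_{k−1} + R_{k−2} with ε_k = (−1)^⌊kq/p⌋), set ι = P_{p−2}, and let ℓ′ be the unique odd integer with 0 < ℓ′ < 2p and qℓ′ ≡ −1 (mod 2p). Then P_{ℓ′−1} · Q_{p−2} ≡ −ι · (P_{ℓ′} + P_{ℓ′−2}) (mod P_{p−1}) in ℚ[X]. -/

import Mathlib

open Polynomial

/-- `ε_k = (−1)^⌊kq/p⌋` (for `p > 0`, `Int.fdiv` is the floor of the rational `kq/p`). -/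
def eps (p q k : ℤ) : ℤ := (((-1 : ℤˣ) ^ ((k * q).fdiv p) : ℤˣ) : ℤ)

lemma neg_one_zpow_two_mul_add (t r : ℤ) : ((-1 : ℤˣ) ^ (r + t * 2) : ℤˣ) = (-1)^r := by
  rw [zpow_add, mul_comm t 2, zpow_mul, show ((2:ℤ)) = ((2:ℕ):ℤ) from rfl, zpow_natCast]
  norm_num

lemma eps_char {p : ℤ} (q : ℤ) (hp : 0 < p) (k : ℤ) :
    eps p q k = if (k * q) % (2 * p) < p then 1 else -1 := by
  unfold eps
  rw [Int.fdiv_eq_ediv_of_nonneg _ hp.le]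
  set m := k * q with hm
  have h2p : (0:ℤ) < 2 * p := by linarith
  have h1 : m / p = m % (2 * p) / p + m / (2 * p) * 2 := by
    conv_lhs => rw [← Int.emod_add_mul_ediv m (2 * p)]
    have h : m % (2*p) + 2*p*(m/(2*p)) = m % (2*p) + (m/(2*p)*2)*p := by ring
    rw [h, Int.add_mul_ediv_right _ _ hp.ne']
  have hr0 : 0 ≤ m % (2*p) := Int.emod_nonneg m h2p.ne'
  have hr2 : m % (2*p) < 2*p := Int.emod_lt_of_pos m h2p
  by_cases h : m % (2*p) < p
  · have hz : m % (2*p) / p = 0 := Int.ediv_eq_zero_of_lt hr0 h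
    rw [if_pos h, h1, hz, neg_one_zpow_two_mul_add]
    norm_num
  · have hz : m % (2*p) / p = 1 := by
      have e : m % (2*p) = (m % (2*p) - p) + 1 * p := by ring
      rw [e, Int.add_mul_ediv_right _ _ hp.ne',
        Int.ediv_eq_zero_of_lt (by omega) (by omega)]
      norm_num
    rw [if_neg h, h1, hz, neg_one_zpow_two_mul_add]
    norm_num

lemma emod_shift (n a b : ℤ) (h : n ∣ a - b) : a % n = b % n := by
  obtain ⟨c, hc⟩ := h
  have : a = b + n * c := by linarith
  rw [this, Int.add_mul_emod_self_left]

lemma eps_add_p {p q : ℤ} (hp : 0 < p) (hq : Odd q) (j : ℤ) :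
    eps p q (p + j) = - eps p q j := by
  obtain ⟨t, ht⟩ := hq
  rw [eps_char q hp, eps_char q hp]
  have h2p : (0:ℤ) < 2 * p := by linarith
  have hr0 : 0 ≤ j * q % (2*p) := Int.emod_nonneg _ h2p.ne'
  have hr2 : j * q % (2*p) < 2*p := Int.emod_lt_of_pos _ h2p
  have hmd := Int.emod_add_mul_ediv (j * q) (2*p)
  have hpq : p * q = p + 2*p*t := by rw [ht]; ring
  have e2 : ((p+j)*q) % (2*p) = (j*q % (2*p) + p) % (2*p) :=
    emod_shift _ _ _ ⟨t + j * q / (2*p), by linear_combination hpq - hmd⟩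
  rw [e2]
  rcases lt_or_ge (j * q % (2*p)) p with h | h
  · rw [show (j*q%(2*p)+p) % (2*p) = j*q%(2*p)+p from Int.emod_eq_of_lt (by omega) (by omega),
      if_neg (by omega), if_pos h]
  · rw [show (j*q%(2*p)+p) % (2*p) = (j*q%(2*p)-p) % (2*p) from
        emod_shift _ _ _ ⟨1, by ring⟩,
      show (j*q%(2*p)-p) % (2*p) = j*q%(2*p)-p from Int.emod_eq_of_lt (by omega) (by omega),
      if_pos (by omega), if_neg (by omega)]
    norm_num

lemma eps_lsub {p q ℓ' : ℤ} (hp : 0 < p) (hℓ : 2 * p ∣ q * ℓ' + 1) (j : ℤ) :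
    eps p q (ℓ' - j) = - eps p q j := by
  obtain ⟨s, hs⟩ := hℓ
  rw [eps_char q hp, eps_char q hp]
  have h2p : (0:ℤ) < 2 * p := by linarith
  have hr0 : 0 ≤ j * q % (2*p) := Int.emod_nonneg _ h2p.ne'
  have hr2 : j * q % (2*p) < 2*p := Int.emod_lt_of_pos _ h2p
  have hmd := Int.emod_add_mul_ediv (j * q) (2*p)
  have e2 : ((ℓ'-j)*q) % (2*p) = (2*p - 1 - j*q % (2*p)) % (2*p) :=
    emod_shift _ _ _ ⟨s - 1 - j*q/(2*p), by linear_combination hs + hmd⟩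
  rw [e2, show (2*p-1-j*q%(2*p)) % (2*p) = 2*p-1-j*q%(2*p) from
      Int.emod_eq_of_lt (by omega) (by omega)]
  rcases lt_or_ge (j * q % (2*p)) p with h | h
  · rw [if_neg (by omega), if_pos h]
  · rw [if_pos (by omega), if_neg (by omega)]
    norm_num

lemma eps_neg {p q : ℤ} (hp : 0 < p) (hcop : IsCoprime p q) {j : ℤ}
    (hj0 : 0 < j) (hjp : j < p) : eps p q (-j) = - eps p q j := by
  rw [eps_char q hp, eps_char q hp]
  have h2p : (0:ℤ) < 2 * p := by linarith
  have hr0 : 0 ≤ j * q % (2*p) := Int.emod_nonneg _ h2p.ne'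
  have hr2 : j * q % (2*p) < 2*p := Int.emod_lt_of_pos _ h2p
  have hmd := Int.emod_add_mul_ediv (j * q) (2*p)
  have hpr : ¬ (p ∣ j * q % (2*p)) := by
    intro hd
    obtain ⟨u, hu⟩ := hd
    have hdvd : p ∣ j * q := ⟨u + 2*(j*q/(2*p)), by linear_combination hu - hmd⟩
    have hdj : p ∣ j := hcop.dvd_of_dvd_mul_right hdvd
    have := Int.le_of_dvd hj0 hdj
    omega
  have e2 : ((-j)*q) % (2*p) = (2*p - j*q % (2*p)) % (2*p) :=
    emod_shift _ _ _ ⟨-1 - j*q/(2*p), by linear_combination hmd⟩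
  have hne0 : j * q % (2*p) ≠ 0 := fun h => hpr (h ▸ dvd_zero p)
  have hnep : j * q % (2*p) ≠ p := fun h => hpr (by rw [h])
  rw [e2, show (2*p-j*q%(2*p)) % (2*p) = 2*p-j*q%(2*p) from
      Int.emod_eq_of_lt (by omega) (by omega)]
  rcases lt_or_ge (j * q % (2*p)) p with h | h
  · rw [if_neg (by omega), if_pos h]
  · rw [if_pos (by omega), if_neg (by omega)]
    norm_num

lemma eps_zero (p q : ℤ) : eps p q 0 = 1 := by
  unfold eps
  norm_num


lemma eps_p_sub {p q : ℤ} (hp : 0 < p) (hq : Odd q) (hcop : IsCoprime p q) {j : ℤ}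
    (hj0 : 0 < j) (hjp : j < p) : eps p q (p - j) = eps p q j := by
  rw [show p - j = p + (-j) by ring, eps_add_p hp hq, eps_neg hp hcop hj0 hjp, neg_neg]

lemma negOnePow_add_two (n : ℤ) : (n+2).negOnePow = n.negOnePow := by
  rw [show n+2 = (n+1)+1 by ring, Int.negOnePow_succ, Int.negOnePow_succ, neg_neg]

theorem cusp_shape_identity (p q ℓ' : ℤ) (hp : Odd p) (hq : Odd q) (hq0 : 0 < q) (hqp : q < p)
    (hcop : IsCoprime p q)
    (hℓodd : Odd ℓ') (hℓ0 : 0 < ℓ') (hℓ2p : ℓ' < 2 * p) (hℓ : 2 * p ∣ q * ℓ' + 1)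
    (P Q : ℤ → Polynomial ℚ)
    (hP0 : P 0 = 1) (hP1 : P (-1) = 0)
    (hQ0 : Q 0 = 0) (hQ1 : Q (-1) = 1)
    (hPrec : ∀ k : ℤ, P k = C ((eps p q k : ℚ)) * X * P (k - 1) + P (k - 2))
    (hQrec : ∀ k : ℤ, Q k = C ((eps p q k : ℚ)) * X * Q (k - 1) + Q (k - 2)) :
    P (p - 1) ∣ (P (ℓ' - 1) * Q (p - 2) + P (p - 2) * (P ℓ' + P (ℓ' - 2))) := by
  have hp0 : 0 < p := lt_trans hq0 hqp
  -- Palindrome: Q (p-1) = P (p-2)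
  have pal_inv : ∀ j : ℕ, (j:ℤ) ≤ p - 1 →
      P (p-1-j) * Q j + P (p-2-j) * Q ((j:ℤ)-1) = P (p-2) := by
    intro j
    induction j with
    | zero => intro _; norm_num [hQ0, hQ1]
    | succ i ih =>
      intro hj
      push_cast at hj ⊢
      have ih' := ih (by omega)
      have eP := hPrec (p-1-(i:ℤ))
      have eQ := hQrec ((i:ℤ)+1)
      have he : eps p q (p-1-(i:ℤ)) = eps p q ((i:ℤ)+1) := by
        rw [show p-1-(i:ℤ) = p - ((i:ℤ)+1) by ring]
        exact eps_p_sub hp0 hq hcop (by omega) (by omega)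
      rw [he] at eP
      rw [show p-1-(i:ℤ)-1 = p-2-(i:ℤ) by ring, show p-1-(i:ℤ)-2 = p-2-((i:ℤ)+1) by ring] at eP
      rw [show ((i:ℤ)+1)-1 = (i:ℤ) by ring, show ((i:ℤ)+1)-2 = (i:ℤ)-1 by ring] at eQ
      rw [show p-1-((i:ℤ)+1) = p-2-(i:ℤ) by ring, show ((i:ℤ)+1)-1 = (i:ℤ) by ring]
      linear_combination ih' + P (p-2-(i:ℤ)) * eQ - Q (i:ℤ) * eP
  have pal : Q (p-1) = P (p-2) := by
    have h := pal_inv (p-1).toNat (by omega)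
    rw [Int.toNat_of_nonneg (by omega)] at h
    rw [show p-1-(p-1) = 0 by ring, show p-2-(p-1) = -1 by ring] at h
    rw [hP0, hP1] at h
    linear_combination h
  -- anti-palindromic invariant around ℓ'
  have Ginv : ∀ j : ℤ, P (ℓ'-1-j) * Q j - P (ℓ'-2-j) * Q (j-1)
      = C (((j.negOnePow : ℤ) : ℚ)) * (- P (ℓ'-2)) := by
    intro j
    induction j using Int.induction_on with
    | zero => rw [hQ0, show (0:ℤ)-1 = -1 by ring, hQ1, Int.negOnePow_zero]; push_cast; simp
    | succ i ih =>
      have eP := hPrec (ℓ'-1-(i:ℤ))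
      have eQ := hQrec ((i:ℤ)+1)
      have he : eps p q (ℓ'-1-(i:ℤ)) = - eps p q ((i:ℤ)+1) := by
        rw [show ℓ'-1-(i:ℤ) = ℓ' - ((i:ℤ)+1) by ring]
        exact eps_lsub hp0 hℓ _
      rw [he] at eP
      rw [show ℓ'-1-(i:ℤ)-1 = ℓ'-2-(i:ℤ) by ring,
        show ℓ'-1-(i:ℤ)-2 = ℓ'-2-((i:ℤ)+1) by ring] at eP
      rw [show ((i:ℤ)+1)-1 = (i:ℤ) by ring, show ((i:ℤ)+1)-2 = (i:ℤ)-1 by ring] at eQ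
      rw [show ℓ'-1-((i:ℤ)+1) = ℓ'-2-(i:ℤ) by ring, show ((i:ℤ)+1)-1 = (i:ℤ) by ring,
        Int.negOnePow_succ]
      push_cast at eP ⊢
      simp only [map_neg] at eP ⊢
      linear_combination -ih + P (ℓ'-2-(i:ℤ)) * eQ + Q (i:ℤ) * eP
    | pred i ih =>
      have eP := hPrec (ℓ'+(i:ℤ))
      have eQ := hQrec (-(i:ℤ))
      have he : eps p q (ℓ'+(i:ℤ)) = - eps p q (-(i:ℤ)) := by
        rw [show ℓ'+(i:ℤ) = ℓ' - (-(i:ℤ)) by ring]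
        exact eps_lsub hp0 hℓ _
      rw [he] at eP
      have hc := Int.negOnePow_succ (-(i:ℤ)-1)
      rw [show -(i:ℤ)-1+1 = -(i:ℤ) by ring] at hc
      rw [hc, show ℓ' - 1 - -(i:ℤ) = ℓ' + (i:ℤ) - 1 by ring,
        show ℓ' - 2 - -(i:ℤ) = ℓ' + (i:ℤ) - 2 by ring] at ih
      rw [show ℓ'-1-(-(i:ℤ)-1) = ℓ'+(i:ℤ) by ring,
        show ℓ'-2-(-(i:ℤ)-1) = ℓ'+(i:ℤ)-1 by ring,
        show (-(i:ℤ)-1)-1 = -(i:ℤ)-2 by ring]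
      push_cast at eP ih ⊢
      simp only [map_neg] at eP ih ⊢
      linear_combination -ih + Q (-(i:ℤ)-1) * eP + P (ℓ'+(i:ℤ)-1) * eQ
  -- shift lemma
  have hep : eps p q p = -1 := by
    have h := eps_add_p hp0 hq 0
    rw [add_zero, eps_zero] at h
    exact h
  have key : ∀ k : ℤ,
      (P (p-1) ∣ P (p-1+k) - C (((k+1).negOnePow : ℤ) : ℚ) * P (p-2) * P (k-1)) ∧
      (P (p-1) ∣ P (p-1+(k+1)) - C ((((k+1)+1).negOnePow : ℤ) : ℚ) * P (p-2) * P ((k+1)-1)) := by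
    intro k
    induction k using Int.induction_on with
    | zero =>
      constructor
      · rw [show p-1+(0:ℤ) = p-1 by ring, show (0:ℤ)-1 = -1 by ring, hP1]
        simp
      · rw [show p-1+((0:ℤ)+1) = p by ring, show ((0:ℤ)+1)-1 = 0 by ring, hP0,
          show ((0:ℤ)+1)+1 = 0+2 by ring, negOnePow_add_two, Int.negOnePow_zero]
        have ep := hPrec p
        rw [hep] at ep
        refine ⟨-X, ?_⟩
        push_cast at ep ⊢
        simp only [map_neg, map_one] at ep ⊢
        linear_combination ep
    | succ i ih =>
      obtain ⟨h1, h2⟩ := ih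
      refine ⟨h2, ?_⟩
      have e1 := hPrec (p+((i:ℤ)+1))
      have e2 := hPrec ((i:ℤ)+1)
      have he : eps p q (p+((i:ℤ)+1)) = - eps p q ((i:ℤ)+1) := eps_add_p hp0 hq _
      rw [he] at e1
      rw [show p+((i:ℤ)+1)-1 = p-1+((i:ℤ)+1) by ring,
        show p+((i:ℤ)+1)-2 = p-1+(i:ℤ) by ring] at e1
      rw [show ((i:ℤ)+1)-1 = (i:ℤ) by ring, show ((i:ℤ)+1)-2 = (i:ℤ)-1 by ring] at e2
      have hcu_a := Int.negOnePow_succ (i:ℤ)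
      have hcu_b := negOnePow_add_two (i:ℤ)
      rw [show (i:ℤ)+2 = ((i:ℤ)+1)+1 by ring] at hcu_b
      have hcu_c := negOnePow_add_two ((i:ℤ)+1)
      rw [show (i:ℤ)+1+2 = (((i:ℤ)+1)+1)+1 by ring] at hcu_c
      rw [hcu_a] at h1
      rw [hcu_b, show ((i:ℤ)+1)-1 = (i:ℤ) by ring] at h2
      rw [show p-1+(((i:ℤ)+1)+1) = p+((i:ℤ)+1) by ring,
        show (((i:ℤ)+1)+1)-1 = (i:ℤ)+1 by ring, hcu_c, hcu_a]
      obtain ⟨a, ha⟩ := h1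
      obtain ⟨b, hb⟩ := h2
      refine ⟨-(C ((eps p q ((i:ℤ)+1) : ℚ)))*X*b + a, ?_⟩
      push_cast at e1 ha hb ⊢
      simp only [map_neg] at e1 ha hb ⊢
      linear_combination -(C ((eps p q ((i:ℤ)+1) : ℚ))) * X * hb + ha + e1
        + C (((i:ℤ).negOnePow : ℤ) : ℚ) * P (p-2) * e2
    | pred i ih =>
      obtain ⟨h1, h2⟩ := ih
      refine ⟨?_, by rw [show -(i:ℤ)-1+1 = -(i:ℤ) by ring]; exact h1⟩
      have e1 := hPrec (p+(-(i:ℤ)))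
      have e2 := hPrec (-(i:ℤ))
      have he : eps p q (p+(-(i:ℤ))) = - eps p q (-(i:ℤ)) := eps_add_p hp0 hq _
      rw [he] at e1
      rw [show p+(-(i:ℤ))-1 = p-1+(-(i:ℤ)) by ring,
        show p+(-(i:ℤ))-2 = p-1+(-(i:ℤ)-1) by ring] at e1
      have hcu := Int.negOnePow_succ (-(i:ℤ)-1)
      rw [show -(i:ℤ)-1+1 = -(i:ℤ) by ring] at hcu
      have hcu2 := negOnePow_add_two (-(i:ℤ)-1)
      rw [show -(i:ℤ)-1+2 = -(i:ℤ)+1 by ring] at hcu2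
      have hcu3 := negOnePow_add_two (-(i:ℤ))
      rw [show -(i:ℤ)+2 = (-(i:ℤ)+1)+1 by ring] at hcu3
      rw [hcu2] at h1
      rw [show p-1+(-(i:ℤ)+1) = p+(-(i:ℤ)) by ring,
        show (-(i:ℤ)+1)-1 = -(i:ℤ) by ring, hcu3, hcu] at h2
      rw [show (-(i:ℤ)-1)-1 = -(i:ℤ)-2 by ring,
        show (-(i:ℤ)-1)+1 = -(i:ℤ) by ring, hcu]
      obtain ⟨a, ha⟩ := h1
      obtain ⟨b, hb⟩ := h2
      refine ⟨b + (C ((eps p q (-(i:ℤ)) : ℚ)))*X*a, ?_⟩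
      push_cast at e1 e2 ha hb ⊢
      simp only [map_neg] at e1 e2 ha hb ⊢
      linear_combination hb + C ((eps p q (-(i:ℤ)) : ℚ)) * X * ha - e1
        - C (((-(i:ℤ)-1).negOnePow : ℤ) : ℚ) * P (p-2) * e2
  -- assembly
  have hm_even : Even (ℓ' - p) := Odd.sub_odd hℓodd hp
  obtain ⟨E1, E2⟩ := key (ℓ' - p)
  rw [show p-1+(ℓ'-p) = ℓ'-1 by ring, Int.negOnePow_odd _ (Even.add_one hm_even)] at E1
  rw [show p-1+((ℓ'-p)+1) = ℓ' by ring, show ((ℓ'-p)+1)-1 = ℓ'-p by ring,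
    show ((ℓ'-p)+1)+1 = (ℓ'-p)+2 by ring, negOnePow_add_two,
    Int.negOnePow_even _ hm_even] at E2
  have K := Ginv (p-1)
  rw [show ℓ'-1-(p-1) = ℓ'-p by ring, show ℓ'-2-(p-1) = (ℓ'-p)-1 by ring,
    show p-1-1 = p-2 by ring, pal,
    Int.negOnePow_even _ (Odd.sub_odd hp odd_one)] at K
  push_cast at E1 E2 K
  simp only [map_neg, map_one, Units.val_neg, Units.val_one, neg_mul, one_mul,
    sub_neg_eq_add] at E1 E2 K
  obtain ⟨a, ha⟩ := E1
  obtain ⟨b, hb⟩ := E2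
  refine ⟨Q (p-2) * a + P (p-2) * b, ?_⟩
  linear_combination Q (p-2) * ha + P (p-2) * hb + P (p-2) * K
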